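/- Let M be the ℤ-submodule of ℚ generated by the set {1/p : p a prime number}. Then for every prime ideal P of ℤ, the κ(P)-vector space κ(P) ⊗_ℤ M has dimension 1. -/

import Mathlib

open TensorProduct

universe u

/-- `κ(P)`: the residue field of the localization of `R` at the prime `P`. -/
noncomputable abbrev kappa {R : Type u} [CommRing R] (P : Ideal R) [P.IsPrime] : Type u :=
  IsLocalRing.ResidueField (Localization.AtPrime P)

/-- `M`: the `ℤ`-submodule of `ℚ` generated by the reciprocals of the prime numbers. -/
def reciprocalPrimesModule : Submodule ℤ ℚ :=
  Submodule.span ℤ {q : ℚ | ∃ p : ℕ, p.Prime ∧ q = (p : ℚ)⁻¹}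

namespace Stmt17Aux

noncomputable section

lemma mem_recip (q : ℕ) (hq : q.Prime) : ((q : ℚ))⁻¹ ∈ reciprocalPrimesModule :=
  Submodule.subset_span ⟨q, hq, rfl⟩

lemma one_mem_recip : (1 : ℚ) ∈ reciprocalPrimesModule := by
  have h := reciprocalPrimesModule.smul_mem (2 : ℤ) (mem_recip 2 Nat.prime_two)
  norm_num at h
  exact h

def vfun : {q : ℕ // q.Prime} → ℚ := fun q => ((q : ℕ) : ℚ)⁻¹

def piMap : ({q : ℕ // q.Prime} →₀ ℤ) →ₗ[ℤ] ℚ := Finsupp.linearCombination ℤ vfun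

lemma range_piMap : LinearMap.range piMap = reciprocalPrimesModule := by
  rw [piMap, Finsupp.range_linearCombination, reciprocalPrimesModule]
  congr 1
  ext x
  constructor
  · rintro ⟨⟨q, hq⟩, rfl⟩; exact ⟨q, hq, rfl⟩
  · rintro ⟨q, hq, rfl⟩; exact ⟨⟨q, hq⟩, rfl⟩

lemma dvd_of_mem_ker {p : ℕ} (hp : p.Prime) (a : {q : ℕ // q.Prime} →₀ ℤ)
    (ha : piMap a = 0) : (p : ℤ) ∣ a ⟨p, hp⟩ := by
  set pidx : {q : ℕ // q.Prime} := ⟨p, hp⟩ with hpidx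
  by_cases hmem : pidx ∈ a.support
  · set S := a.support.erase pidx with hS
    set N : ℤ := ∏ q ∈ S, ((q : ℕ) : ℤ) with hN
    set t : ℤ := ∑ q ∈ S, a q * p * (∏ r ∈ S.erase q, ((r : ℕ) : ℤ)) with ht
    have hsum : ((a pidx : ℚ)) * ((p : ℚ))⁻¹ + ∑ q ∈ S, (a q : ℚ) * vfun q = 0 := by
      rw [piMap, Finsupp.linearCombination_apply, Finsupp.sum] at ha
      rw [← Finset.add_sum_erase _ _ hmem] at ha
      simpa [zsmul_eq_mul, vfun] using ha
    have hp0 : ((p : ℚ)) ≠ 0 := Nat.cast_ne_zero.mpr hp.ne_zero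
    have hNv : ∀ q ∈ S, (N : ℚ) * vfun q = (∏ r ∈ S.erase q, ((r : ℕ) : ℚ)) := by
      intro q hq
      have hq0 : ((q : ℕ) : ℚ) ≠ 0 := Nat.cast_ne_zero.mpr q.2.ne_zero
      have : (N : ℚ) = ((q : ℕ) : ℚ) * ∏ r ∈ S.erase q, ((r : ℕ) : ℚ) := by
        rw [hN]; push_cast
        rw [← Finset.mul_prod_erase S _ hq]
      rw [this, vfun]
      field_simp
    have key : ((a pidx * N + t : ℤ) : ℚ) = 0 := by
      have e1 : ((a pidx * N + t : ℤ) : ℚ)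
          = (p : ℚ) * (N : ℚ) * ((a pidx : ℚ) * ((p : ℚ))⁻¹ + ∑ q ∈ S, (a q : ℚ) * vfun q) := by
        rw [mul_add, Finset.mul_sum]
        push_cast [ht]
        rw [Finset.sum_congr rfl (fun q hq => ?_)]
        · field_simp
        · have := hNv q hq
          push_cast at this ⊢
          rw [← this]; ring
      rw [e1, hsum, mul_zero]
    have hz : a pidx * N + t = 0 := by exact_mod_cast key
    have hpt : (p : ℤ) ∣ t := by
      apply Finset.dvd_sum
      intro q hq
      exact ⟨a q * ∏ r ∈ S.erase q, ((r : ℕ) : ℤ), by ring⟩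
    have hpN : ¬ (p : ℤ) ∣ N := by
      intro hdvd
      have hprime : Prime (p : ℤ) := Nat.prime_iff_prime_int.mp hp
      obtain ⟨q, hqS, hq⟩ := hprime.exists_mem_finset_dvd hdvd
      have : p ∣ (q : ℕ) := Int.ofNat_dvd.mp hq
      have : p = (q : ℕ) := (Nat.prime_dvd_prime_iff_eq hp q.2).mp this
      have : q = pidx := Subtype.ext this.symm
      rw [this] at hqS
      exact Finset.notMem_erase _ _ hqS
    have : (p : ℤ) ∣ a pidx * N := by
      have : a pidx * N = -t := by linarith
      rw [this]
      exact dvd_neg.mpr hpt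
    rcases (Nat.prime_iff_prime_int.mp hp).dvd_mul.mp this with h | h
    · exact h
    · exact absurd h hpN
  · rw [Finsupp.notMem_support_iff.mp hmem]
    exact dvd_zero _


def ghat (p : ℕ) (hp : p.Prime) : ({q : ℕ // q.Prime} →₀ ℤ) →ₗ[ℤ] ZMod p :=
  (Int.castAddHom (ZMod p)).toIntLinearMap ∘ₗ Finsupp.lapply ⟨p, hp⟩

lemma exists_gZMod (p : ℕ) (hp : p.Prime) :
    ∃ g : reciprocalPrimesModule →ₗ[ℤ] ZMod p,
      g ⟨(p : ℚ)⁻¹, mem_recip p hp⟩ = 1 := by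
  have hker : LinearMap.ker piMap ≤ LinearMap.ker (ghat p hp) := by
    intro a ha
    rw [LinearMap.mem_ker] at ha ⊢
    have := dvd_of_mem_ker hp a ha
    simp only [ghat, LinearMap.comp_apply, Finsupp.lapply_apply,
      AddMonoidHom.coe_toIntLinearMap, Int.coe_castAddHom]
    exact (ZMod.intCast_zmod_eq_zero_iff_dvd _ _).mpr this
  set l : (({q : ℕ // q.Prime} →₀ ℤ) ⧸ LinearMap.ker piMap) →ₗ[ℤ] ZMod p :=
    (LinearMap.ker piMap).liftQ (ghat p hp) hker with hl
  set e2 : reciprocalPrimesModule ≃ₗ[ℤ] LinearMap.range piMap :=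
    LinearEquiv.ofEq _ _ range_piMap.symm with he2
  refine ⟨l ∘ₗ (piMap.quotKerEquivRange.symm.toLinearMap) ∘ₗ e2.toLinearMap, ?_⟩
  have hsingle : piMap (Finsupp.single ⟨p, hp⟩ 1) = (p : ℚ)⁻¹ := by
    simp [piMap, vfun]
  have hm : e2 ⟨(p : ℚ)⁻¹, mem_recip p hp⟩
      = ⟨piMap (Finsupp.single ⟨p, hp⟩ 1), LinearMap.mem_range_self _ _⟩ := by
    apply Subtype.ext
    simp [he2, hsingle]
  simp only [LinearMap.comp_apply, LinearEquiv.coe_toLinearMap, hm,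
    LinearMap.quotKerEquivRange_symm_apply_image]
  rw [hl]
  have : (LinearMap.ker piMap).mkQ (Finsupp.single ⟨p, hp⟩ 1)
      = Submodule.Quotient.mk (Finsupp.single ⟨p, hp⟩ 1) := rfl
  rw [this, Submodule.liftQ_apply]
  simp [ghat]

lemma intCast_kappa_eq_zero_iff (P : Ideal ℤ) [P.IsPrime] (n : ℤ) :
    ((n : kappa P) = 0) ↔ n ∈ P := by
  have h1 : ((n : kappa P))
      = IsLocalRing.residue (Localization.AtPrime P)
          (algebraMap ℤ (Localization.AtPrime P) n) := by
    rw [eq_intCast (algebraMap ℤ (Localization.AtPrime P)), map_intCast]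
  rw [h1, ← RingHom.mem_ker, IsLocalRing.ker_residue, ← Ideal.mem_comap,
    ← Ideal.under_def, Localization.AtPrime.comap_maximalIdeal]

lemma main_aux (P : Ideal ℤ) [P.IsPrime] (p : ℕ) (hp : p.Prime)
    (g : reciprocalPrimesModule →ₗ[ℤ] kappa P)
    (hg : g ⟨(p : ℚ)⁻¹, mem_recip p hp⟩ ≠ 0)
    (hq0 : ∀ q : ℕ, q.Prime → ((q : ℕ) : kappa P) = 0 → q = p) :
    Module.rank (kappa P) (kappa P ⊗[ℤ] reciprocalPrimesModule) = 1 := by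
  classical
  set m₀ : reciprocalPrimesModule := ⟨(p : ℚ)⁻¹, mem_recip p hp⟩ with hm₀
  set v0 : kappa P ⊗[ℤ] reciprocalPrimesModule := (1 : kappa P) ⊗ₜ[ℤ] m₀ with hv0
  set B : kappa P →ₗ[ℤ] reciprocalPrimesModule →ₗ[ℤ] kappa P :=
    LinearMap.mk₂ ℤ (fun k m => k * g m)
      (fun k k' m => by rw [add_mul])
      (fun c k m => by rw [smul_mul_assoc])
      (fun k m m' => by rw [map_add, mul_add])
      (fun c k m => by rw [map_smul, mul_smul_comm]) with hB
  set F : kappa P ⊗[ℤ] reciprocalPrimesModule →ₗ[ℤ] kappa P := TensorProduct.lift B with hF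
  have hFv0 : F v0 = g m₀ := by
    rw [hv0, hF]
    show (TensorProduct.lift B) ((1 : kappa P) ⊗ₜ[ℤ] m₀) = g m₀
    rw [TensorProduct.lift.tmul, hB]
    simp
  have hv0ne : v0 ≠ 0 := by
    intro h
    apply hg
    rw [← hFv0, h, map_zero]
  have hspan : ∀ m : reciprocalPrimesModule,
      (1 : kappa P) ⊗ₜ[ℤ] m ∈ Submodule.span (kappa P) {v0} := by
    set S := Submodule.span (kappa P) {v0} with hS
    set T : Submodule ℤ reciprocalPrimesModule :=
      Submodule.comap ((TensorProduct.mk ℤ (kappa P) reciprocalPrimesModule) 1)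
        (S.restrictScalars ℤ) with hT
    have hgen : {x : ℚ | ∃ q : ℕ, q.Prime ∧ x = (q : ℚ)⁻¹}
        ⊆ ↑(Submodule.map reciprocalPrimesModule.subtype T) := by
      rintro x ⟨q, hq, rfl⟩
      refine ⟨⟨(q : ℚ)⁻¹, mem_recip q hq⟩, ?_, rfl⟩
      have hqQ : ((q : ℕ) : ℚ) ≠ 0 := Nat.cast_ne_zero.mpr hq.ne_zero
      have hpQ : ((p : ℕ) : ℚ) ≠ 0 := Nat.cast_ne_zero.mpr hp.ne_zero
      have hsm : (q : ℤ) • (⟨(q : ℚ)⁻¹, mem_recip q hq⟩ : reciprocalPrimesModule)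
          = ⟨1, one_mem_recip⟩ := by
        apply Subtype.ext
        show (q : ℤ) • ((q : ℚ))⁻¹ = 1
        rw [zsmul_eq_mul]
        push_cast
        field_simp
      have hsp : (p : ℤ) • m₀ = ⟨1, one_mem_recip⟩ := by
        apply Subtype.ext
        show (p : ℤ) • ((p : ℚ))⁻¹ = 1
        rw [zsmul_eq_mul]
        push_cast
        field_simp
      have key : ((q : ℕ) : kappa P) • ((1 : kappa P) ⊗ₜ[ℤ]
            (⟨(q : ℚ)⁻¹, mem_recip q hq⟩ : reciprocalPrimesModule))
          = ((p : ℕ) : kappa P) • v0 := by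
        have e1 : ((q : ℕ) : kappa P) = (((q : ℕ) : ℤ) : kappa P) := by push_cast; rfl
        have e2 : ((p : ℕ) : kappa P) = (((p : ℕ) : ℤ) : kappa P) := by push_cast; rfl
        rw [e1, e2, Int.cast_smul_eq_zsmul, Int.cast_smul_eq_zsmul, hv0,
          ← TensorProduct.tmul_smul, ← TensorProduct.tmul_smul, hsm, hsp]
      show (1 : kappa P) ⊗ₜ[ℤ]
          (⟨(q : ℚ)⁻¹, mem_recip q hq⟩ : reciprocalPrimesModule) ∈ S
      by_cases hc : ((q : ℕ) : kappa P) = 0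
      · have hqp : q = p := hq0 q hq hc
        subst hqp
        exact Submodule.mem_span_singleton_self v0
      · have := congrArg (fun z => (((q : ℕ) : kappa P))⁻¹ • z) key
        simp only [smul_smul, inv_mul_cancel₀ hc, one_smul] at this
        rw [this]
        exact Submodule.smul_mem _ _ (Submodule.mem_span_singleton_self v0)
    have hle : reciprocalPrimesModule ≤ Submodule.map reciprocalPrimesModule.subtype T := by
      exact Submodule.span_le.mpr hgen
    intro m
    obtain ⟨y, hyT, hy⟩ := hle m.2
    have hym : y = m := Subtype.ext hy
    subst hym
    exact hyT
  refine rank_eq_one v0 hv0ne ?_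
  intro w
  have htop : w ∈ Submodule.span (kappa P) {v0} := by
    induction w using TensorProduct.induction_on with
    | zero => exact Submodule.zero_mem _
    | tmul c m =>
        have h1 := hspan m
        have h2 : c ⊗ₜ[ℤ] m = c • ((1 : kappa P) ⊗ₜ[ℤ] m) := by
          rw [TensorProduct.smul_tmul', smul_eq_mul, mul_one]
        rw [h2]
        exact Submodule.smul_mem _ _ h1
    | add x y hx hy => exact Submodule.add_mem _ hx hy
  exact Submodule.mem_span_singleton.mp htop

end

end Stmt17Aux


open Stmt17Aux

/-- Let `M ⊆ ℚ` be the `ℤ`-submodule generated by `{1/p : p prime}`.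
For every prime ideal `P` of `ℤ`, the `κ(P)`-vector space `κ(P) ⊗[ℤ] M` has
dimension `1`. -/
theorem stmt_17 (P : Ideal ℤ) [P.IsPrime] :
    Module.rank (kappa P) (kappa P ⊗[ℤ] reciprocalPrimesModule) = 1 := by
  classical
  rcases eq_or_ne P ⊥ with hbot | hbot
  · subst hbot
    have hinj : Function.Injective (Int.castRingHom (kappa (⊥ : Ideal ℤ))) := by
      rw [injective_iff_map_eq_zero]
      intro n hn
      have h0 : ((n : kappa (⊥ : Ideal ℤ))) = 0 := hn
      have := (intCast_kappa_eq_zero_iff ⊥ n).mp h0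
      simpa using this
    set gQ : ℚ →+* kappa (⊥ : Ideal ℤ) := IsFractionRing.lift hinj with hgQ
    set g : reciprocalPrimesModule →ₗ[ℤ] kappa (⊥ : Ideal ℤ) :=
      gQ.toAddMonoidHom.toIntLinearMap ∘ₗ reciprocalPrimesModule.subtype with hg
    apply main_aux ⊥ 2 Nat.prime_two g
    · have hval : g ⟨((2 : ℕ) : ℚ)⁻¹, mem_recip 2 Nat.prime_two⟩ = gQ (((2 : ℕ) : ℚ))⁻¹ := by
        simp [hg]
      rw [hval]
      intro h
      have h2 : (((2 : ℕ) : ℚ))⁻¹ = 0 := gQ.injective (by rw [h, map_zero])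
      norm_num at h2
    · intro q hq hcast
      exfalso
      have h0 : ((q : ℤ) : kappa (⊥ : Ideal ℤ)) = 0 := by exact_mod_cast hcast
      have := (intCast_kappa_eq_zero_iff ⊥ _).mp h0
      simp only [Ideal.mem_bot, Int.natCast_eq_zero] at this
      exact hq.ne_zero this
  · obtain ⟨gen, hgen⟩ := IsPrincipalIdealRing.principal P
    rw [Ideal.submodule_span_eq] at hgen
    have hgen0 : gen ≠ 0 := by
      rintro rfl
      apply hbot
      rw [hgen]
      exact Ideal.span_singleton_eq_bot.mpr rfl
    have hgprime : Prime gen := by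
      have hPp : Ideal.IsPrime (Ideal.span {gen}) := hgen ▸ inferInstance
      exact (Ideal.span_singleton_prime hgen0).mp hPp
    set p := gen.natAbs with hpdef
    have hp : p.Prime := Int.prime_iff_natAbs_prime.mp hgprime
    have hPp : P = Ideal.span {(p : ℤ)} := by
      rw [hpdef, Int.span_natAbs, ← hgen]
    obtain ⟨g', hg'⟩ := exists_gZMod p hp
    haveI : CharP (kappa P) p := by
      have h0 : ((p : ℕ) : kappa P) = 0 := by
        have h1 : ((p : ℤ) : kappa P) = 0 := by
          refine (intCast_kappa_eq_zero_iff P _).mpr ?_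
          rw [hPp]
          exact Ideal.subset_span rfl
        exact_mod_cast h1
      exact (CharP.charP_iff_prime_eq_zero hp).mpr h0
    set ch : ZMod p →+* kappa P := ZMod.castHom dvd_rfl (kappa P) with hch
    set g : reciprocalPrimesModule →ₗ[ℤ] kappa P :=
      ch.toAddMonoidHom.toIntLinearMap ∘ₗ g' with hgdef
    apply main_aux P p hp g
    · have hval : g ⟨((p : ℕ) : ℚ)⁻¹, mem_recip p hp⟩
          = ch (g' ⟨((p : ℕ) : ℚ)⁻¹, mem_recip p hp⟩) := by
        simp [hgdef]
      rw [hval, hg', map_one]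
      exact one_ne_zero
    · intro q hq hcast
      have h0 : ((q : ℤ) : kappa P) = 0 := by exact_mod_cast hcast
      have hmem := (intCast_kappa_eq_zero_iff P _).mp h0
      rw [hPp, Ideal.mem_span_singleton] at hmem
      have hdvd : p ∣ q := Int.ofNat_dvd.mp hmem
      exact ((Nat.prime_dvd_prime_iff_eq hp hq).mp hdvd).symm
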